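/- arXiv:1711.09530 — 2 statements merged into one kernel-verified Lean document; each statement's English description precedes it below -/
import Mathlib

section
/- Let (X, μ) be a measure space with μ(X) < ∞, let n ≥ 2 be an integer, ν = n/(n−1), p_j = 2ν^j for j ∈ ℕ, and let C ≥ 1, k ≥ 1 be reals. Let F : X → [0, ∞) be a bounded measurable function such that for every j ≥ 0 one has ‖F‖_{L^{p_{j+1}}(μ)} ≤ (C·p_j³·k)^{1/p_j} · ‖F‖_{L^{p_j}(μ)} (note p_{j+1} = ν·p_j). Then ‖F‖_{L^∞(μ)} ≤ C′·k^{n/2}·‖F‖_{L²(μ)}, where C′ > 0 depends only on n and C. -/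
open MeasureTheory Filter
open scoped ENNReal NNReal

/-- Real-analytic core: bound on the partial products of the iteration constants. -/
lemma moser_prod_bound (n : ℕ) (hn : 2 ≤ n) (C : ℝ) (hC : 1 ≤ C) (k : ℝ) (hk : 1 ≤ k)
    (J : ℕ) :
    (∏ j ∈ Finset.range J,
        (C * (2 * ((n : ℝ) / ((n : ℝ) - 1)) ^ j) ^ 3 * k) ^
          (1 / (2 * ((n : ℝ) / ((n : ℝ) - 1)) ^ j)))
      ≤ Real.exp (((n : ℝ) / 2) * Real.log C + (3 * (n : ℝ) + 3 * (n : ℝ) ^ 2) / 2)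
          * k ^ ((n : ℝ) / 2) := by
  have hn1 : (1 : ℝ) ≤ (n : ℝ) - 1 := by
    have : (2 : ℝ) ≤ (n : ℝ) := by exact_mod_cast hn
    linarith
  have hnpos : (0 : ℝ) < n := by linarith
  set ν : ℝ := (n : ℝ) / ((n : ℝ) - 1) with hν
  have hν1 : 1 < ν := by
    rw [hν, lt_div_iff₀ (by linarith)]; linarith
  have hνpos : (0 : ℝ) < ν := by linarith
  have hν2 : ν ≤ 2 := by
    rw [hν, div_le_iff₀ (by linarith)]; linarith
  set r : ℝ := ν⁻¹ with hr
  have hr0 : 0 < r := inv_pos.mpr hνpos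
  have hr1 : r < 1 := inv_lt_one_of_one_lt₀ hν1
  have h1r : (1 : ℝ) - r = (n : ℝ)⁻¹ := by
    rw [hr, hν]
    field_simp
    ring
  have hP : ∀ j : ℕ, (0 : ℝ) < 2 * ν ^ j := fun j => by positivity
  have hPinv : ∀ j : ℕ, 1 / (2 * ν ^ j) = r ^ j / 2 := by
    intro j
    rw [hr, inv_pow]
    field_simp
  have hP1 : ∀ j : ℕ, (1 : ℝ) ≤ 2 * ν ^ j := by
    intro j
    have : (1 : ℝ) ≤ ν ^ j := one_le_pow₀ hν1.le
    nlinarith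
  have hbase : ∀ j : ℕ, (1 : ℝ) ≤ C * (2 * ν ^ j) ^ 3 * k := by
    intro j
    have h1 := hP1 j
    have h3 : (1 : ℝ) ≤ (2 * ν ^ j) ^ 3 := one_le_pow₀ h1
    calc (1:ℝ) ≤ C := hC
      _ ≤ C * (2 * ν ^ j) ^ 3 := le_mul_of_one_le_right (by linarith) h3
      _ ≤ C * (2 * ν ^ j) ^ 3 * k := le_mul_of_one_le_right (by nlinarith) hk
  -- geometric sum bounds
  have hgeom : ∑ j ∈ Finset.range J, r ^ j ≤ (n : ℝ) := by
    have h1 : ∑ j ∈ Finset.range J, r ^ j ≤ ∑' j : ℕ, r ^ j :=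
      Summable.sum_le_tsum _ (fun j _ => by positivity) (summable_geometric_of_lt_one hr0.le hr1)
    rwa [tsum_geometric_of_lt_one hr0.le hr1, h1r, inv_inv] at h1
  have hjgeom : ∑ j ∈ Finset.range J, (j : ℝ) * r ^ j ≤ (n : ℝ) ^ 2 := by
    have hnorm : ‖r‖ < 1 := by rwa [Real.norm_eq_abs, abs_of_pos hr0]
    have hs := hasSum_coe_mul_geometric_of_norm_lt_one (𝕜 := ℝ) hnorm
    have h1 : ∑ j ∈ Finset.range J, (j : ℝ) * r ^ j ≤ r / (1 - r) ^ 2 :=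
      Summable.sum_le_tsum _ (fun j _ => by positivity) hs.summable |>.trans_eq hs.tsum_eq
    have : r / (1 - r) ^ 2 ≤ (n : ℝ) ^ 2 := by
      rw [h1r, div_le_iff₀ (by positivity)]
      have h5 : (n:ℝ)^2 * ((n:ℝ)⁻¹)^2 = 1 := by
        field_simp
      linarith [hr1.le]
    linarith
  -- log bounds
  have hlogC : 0 ≤ Real.log C := Real.log_nonneg hC
  have hlogk : 0 ≤ Real.log k := Real.log_nonneg hk
  have hlogP : ∀ j : ℕ, Real.log (2 * ν ^ j) ≤ 1 + j := by
    intro j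
    rw [Real.log_mul two_ne_zero (by positivity), Real.log_pow]
    have h2 : Real.log 2 ≤ 1 := by
      have := Real.log_le_sub_one_of_pos (x := 2) (by norm_num); linarith
    have hν' : Real.log ν ≤ 1 := by
      have := Real.log_le_sub_one_of_pos hνpos; linarith
    have : (j : ℝ) * Real.log ν ≤ j := by
      calc (j : ℝ) * Real.log ν ≤ (j : ℝ) * 1 :=
            mul_le_mul_of_nonneg_left hν' (Nat.cast_nonneg j)
        _ = j := mul_one _
    linarith
  -- rewrite product as exponential
  have hprod : (∏ j ∈ Finset.range J, (C * (2 * ν ^ j) ^ 3 * k) ^ (1 / (2 * ν ^ j)))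
      = Real.exp (∑ j ∈ Finset.range J,
          Real.log (C * (2 * ν ^ j) ^ 3 * k) * (1 / (2 * ν ^ j))) := by
    rw [Real.exp_sum]
    refine Finset.prod_congr rfl fun j _ => ?_
    exact Real.rpow_def_of_pos (lt_of_lt_of_le one_pos (hbase j)) _
  rw [hprod]
  have hsum : (∑ j ∈ Finset.range J,
        Real.log (C * (2 * ν ^ j) ^ 3 * k) * (1 / (2 * ν ^ j)))
      ≤ ((n : ℝ) / 2) * Real.log C + (3 * (n : ℝ) + 3 * (n : ℝ) ^ 2) / 2
          + ((n : ℝ) / 2) * Real.log k := by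
    have hterm : ∀ j ∈ Finset.range J,
        Real.log (C * (2 * ν ^ j) ^ 3 * k) * (1 / (2 * ν ^ j))
          ≤ ((Real.log C + Real.log k + 3) / 2) * r ^ j + (3 / 2) * ((j : ℝ) * r ^ j) := by
      intro j _
      have hPj := hP j
      have hlog : Real.log (C * (2 * ν ^ j) ^ 3 * k)
          = Real.log C + 3 * Real.log (2 * ν ^ j) + Real.log k := by
        rw [Real.log_mul (by positivity) (by positivity),
          Real.log_mul (by positivity) (by positivity), Real.log_pow]
        push_cast; ring
      rw [hlog, hPinv j]
      have h1 : Real.log C + 3 * Real.log (2 * ν ^ j) + Real.log k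
          ≤ Real.log C + Real.log k + 3 + 3 * j := by
        have := hlogP j; linarith
      have hrj : (0:ℝ) < r ^ j := by positivity
      calc (Real.log C + 3 * Real.log (2 * ν ^ j) + Real.log k) * (r ^ j / 2)
          ≤ (Real.log C + Real.log k + 3 + 3 * j) * (r ^ j / 2) := by
            apply mul_le_mul_of_nonneg_right h1 (by positivity)
        _ = ((Real.log C + Real.log k + 3) / 2) * r ^ j + (3 / 2) * ((j : ℝ) * r ^ j) := by
            ring
    have h2 := Finset.sum_le_sum hterm
    rw [Finset.sum_add_distrib, ← Finset.mul_sum, ← Finset.mul_sum] at h2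
    have h3 : ((Real.log C + Real.log k + 3) / 2) * (∑ j ∈ Finset.range J, r ^ j)
        ≤ ((Real.log C + Real.log k + 3) / 2) * (n : ℝ) :=
      mul_le_mul_of_nonneg_left hgeom (by positivity)
    have h4 : (3 / 2 : ℝ) * (∑ j ∈ Finset.range J, (j : ℝ) * r ^ j)
        ≤ (3 / 2 : ℝ) * (n : ℝ) ^ 2 :=
      mul_le_mul_of_nonneg_left hjgeom (by norm_num)
    nlinarith
  calc Real.exp (∑ j ∈ Finset.range J,
        Real.log (C * (2 * ν ^ j) ^ 3 * k) * (1 / (2 * ν ^ j)))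
      ≤ Real.exp (((n : ℝ) / 2) * Real.log C + (3 * (n : ℝ) + 3 * (n : ℝ) ^ 2) / 2
          + ((n : ℝ) / 2) * Real.log k) := Real.exp_le_exp.mpr hsum
    _ = Real.exp (((n : ℝ) / 2) * Real.log C + (3 * (n : ℝ) + 3 * (n : ℝ) ^ 2) / 2)
          * k ^ ((n : ℝ) / 2) := by
        rw [Real.exp_add, Real.rpow_def_of_pos (by linarith : (0:ℝ) < k), mul_comm (Real.log k)]

/-- Case-1 core of the Moser iteration: let `n ≥ 2`, `ν = n/(n−1)`, `p_j = 2·ν^j`,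
and `C ≥ 1`. There is `C' > 0` depending only on `n` and `C` such that for any
finite measure space `(X, μ)`, any real `k ≥ 1`, and any bounded measurable
nonnegative `F : X → ℝ` satisfying
`‖F‖_{L^{p_{j+1}}} ≤ (C·p_j³·k)^{1/p_j} · ‖F‖_{L^{p_j}}` for all `j`,
one has `‖F‖_{L^∞} ≤ C'·k^{n/2}·‖F‖_{L²}`. -/
theorem moser_iteration_Lp_to_Linfty (n : ℕ) (hn : 2 ≤ n) (C : ℝ) (hC : 1 ≤ C) :
    ∃ C' : ℝ, 0 < C' ∧
      ∀ (X : Type) [MeasurableSpace X] (μ : Measure X) [IsFiniteMeasure μ]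
        (k : ℝ), 1 ≤ k → ∀ F : X → ℝ,
        Measurable F → (∀ x, 0 ≤ F x) → (∃ M : ℝ, ∀ x, F x ≤ M) →
        (∀ j : ℕ,
          eLpNorm F (ENNReal.ofReal (2 * ((n : ℝ) / ((n : ℝ) - 1)) ^ (j + 1))) μ ≤
            ENNReal.ofReal
                ((C * (2 * ((n : ℝ) / ((n : ℝ) - 1)) ^ j) ^ 3 * k) ^
                  (1 / (2 * ((n : ℝ) / ((n : ℝ) - 1)) ^ j))) *
              eLpNorm F (ENNReal.ofReal (2 * ((n : ℝ) / ((n : ℝ) - 1)) ^ j)) μ) →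
        eLpNorm F ⊤ μ ≤
          ENNReal.ofReal (C' * k ^ ((n : ℝ) / 2)) * eLpNorm F 2 μ := by
  have hn1 : (1 : ℝ) ≤ (n : ℝ) - 1 := by
    have : (2 : ℝ) ≤ (n : ℝ) := by exact_mod_cast hn
    linarith
  set ν : ℝ := (n : ℝ) / ((n : ℝ) - 1) with hν
  have hν1 : 1 < ν := by rw [hν, lt_div_iff₀ (by linarith)]; linarith
  set B : ℝ := ((n : ℝ) / 2) * Real.log C + (3 * (n : ℝ) + 3 * (n : ℝ) ^ 2) / 2 with hB
  refine ⟨Real.exp B, Real.exp_pos B, ?_⟩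
  intro X _ μ _ k hk F hFmeas hFpos hFbdd hrec
  have hkpos : (0 : ℝ) < k := by linarith
  have hP : ∀ j : ℕ, (0 : ℝ) < 2 * ν ^ j := fun j => by positivity
  have hfac : ∀ j : ℕ, 0 ≤ (C * (2 * ν ^ j) ^ 3 * k) ^ (1 / (2 * ν ^ j)) := by
    intro j
    have := hP j
    positivity
  -- Iteration
  have hiter : ∀ J : ℕ, eLpNorm F (ENNReal.ofReal (2 * ν ^ J)) μ ≤
      ENNReal.ofReal (∏ j ∈ Finset.range J, (C * (2 * ν ^ j) ^ 3 * k) ^ (1 / (2 * ν ^ j)))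
        * eLpNorm F 2 μ := by
    intro J
    induction J with
    | zero =>
      simp only [pow_zero, mul_one, Finset.range_zero, Finset.prod_empty, ENNReal.ofReal_one,
        one_mul]
      rw [ENNReal.ofReal_ofNat]
    | succ J ih =>
      calc eLpNorm F (ENNReal.ofReal (2 * ν ^ (J + 1))) μ
          ≤ ENNReal.ofReal ((C * (2 * ν ^ J) ^ 3 * k) ^ (1 / (2 * ν ^ J)))
              * eLpNorm F (ENNReal.ofReal (2 * ν ^ J)) μ := hrec J
        _ ≤ ENNReal.ofReal ((C * (2 * ν ^ J) ^ 3 * k) ^ (1 / (2 * ν ^ J)))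
              * (ENNReal.ofReal
                  (∏ j ∈ Finset.range J, (C * (2 * ν ^ j) ^ 3 * k) ^ (1 / (2 * ν ^ j)))
                * eLpNorm F 2 μ) := mul_le_mul_right ih _
        _ = ENNReal.ofReal
              (∏ j ∈ Finset.range (J + 1), (C * (2 * ν ^ j) ^ 3 * k) ^ (1 / (2 * ν ^ j)))
            * eLpNorm F 2 μ := by
            rw [Finset.prod_range_succ,
              ENNReal.ofReal_mul (Finset.prod_nonneg fun j _ => hfac j)]
            ring
  have hLp : ∀ J : ℕ, eLpNorm F (ENNReal.ofReal (2 * ν ^ J)) μ ≤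
      ENNReal.ofReal (Real.exp B * k ^ ((n : ℝ) / 2)) * eLpNorm F 2 μ := by
    intro J
    refine (hiter J).trans (mul_le_mul_left (ENNReal.ofReal_le_ofReal ?_) _)
    exact moser_prod_bound n hn C hC k hk J
  rw [eLpNorm_exponent_top]
  refine le_of_forall_lt_imp_le_of_dense fun c hc => ?_
  by_cases hc0 : c = 0
  · simp [hc0]
  have hcne : c ≠ ∞ := (hc.trans_le le_top).ne
  have hSpos : μ {x | c < (‖F x‖₊ : ℝ≥0∞)} ≠ 0 := by
    intro h0
    have hae : ∀ᵐ x ∂μ, (‖F x‖₊ : ℝ≥0∞) ≤ c := by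
      rw [ae_iff]
      simpa [not_le] using h0
    have : eLpNormEssSup F μ ≤ c := essSup_le_of_ae_le c hae
    exact absurd this (not_le.mpr hc)
  have hSle : μ {x | c < (‖F x‖₊ : ℝ≥0∞)} ≤ μ {x | c ≤ (‖F x‖₊ : ℝ≥0∞)} :=
    measure_mono fun x hx => by
      simp only [Set.mem_setOf_eq] at hx ⊢
      exact hx.le
  set m := μ {x | c ≤ (‖F x‖₊ : ℝ≥0∞)} with hm
  have hm0 : m ≠ 0 := by
    intro h
    exact hSpos (le_antisymm (h ▸ hSle) zero_le)
  have hmtop : m ≠ ∞ := (measure_lt_top μ _).ne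
  have hkey : ∀ J : ℕ, c * m ^ (1 / (2 * ν ^ J)) ≤
      ENNReal.ofReal (Real.exp B * k ^ ((n : ℝ) / 2)) * eLpNorm F 2 μ := by
    intro J
    have hPJ := hP J
    have hpt : (ENNReal.ofReal (2 * ν ^ J)).toReal = 2 * ν ^ J :=
      ENNReal.toReal_ofReal hPJ.le
    have hpne0 : ENNReal.ofReal (2 * ν ^ J) ≠ 0 := by
      simp [ENNReal.ofReal_eq_zero, not_le, hPJ, pow_pos (by linarith : (0:ℝ) < ν)]
    have hch := mul_meas_ge_le_pow_eLpNorm' μ hpne0 ENNReal.ofReal_ne_top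
      hFmeas.aestronglyMeasurable c
    rw [hpt] at hch
    have hrpow := ENNReal.rpow_le_rpow hch
      (le_of_lt (by positivity : (0 : ℝ) < 1 / (2 * ν ^ J)))
    rw [ENNReal.mul_rpow_of_nonneg _ _ (by positivity), ← ENNReal.rpow_mul,
      ← ENNReal.rpow_mul, mul_one_div_cancel hPJ.ne', ENNReal.rpow_one,
      ENNReal.rpow_one] at hrpow
    exact hrpow.trans (hLp J)
  by_cases hLtop : ENNReal.ofReal (Real.exp B * k ^ ((n : ℝ) / 2)) * eLpNorm F 2 μ = ∞
  · exact hLtop ▸ le_top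
  have hmR : 0 < m.toReal := ENNReal.toReal_pos hm0 hmtop
  have hrealle : ∀ J : ℕ, c.toReal * m.toReal ^ (1 / (2 * ν ^ J)) ≤
      (ENNReal.ofReal (Real.exp B * k ^ ((n : ℝ) / 2)) * eLpNorm F 2 μ).toReal := by
    intro J
    have h1 := ENNReal.toReal_mono hLtop (hkey J)
    rwa [ENNReal.toReal_mul, ← ENNReal.toReal_rpow] at h1
  have h1 : Tendsto (fun J : ℕ => 1 / (2 * ν ^ J)) atTop (nhds 0) := by
    have h2 : Tendsto (fun J : ℕ => ν ^ J) atTop atTop :=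
      tendsto_pow_atTop_atTop_of_one_lt hν1
    have h3 : Tendsto (fun J : ℕ => 2 * ν ^ J) atTop atTop :=
      h2.const_mul_atTop two_pos
    have h4' := h3.inv_tendsto_atTop
    rwa [show (fun J : ℕ => 2 * ν ^ J)⁻¹ = fun J : ℕ => 1 / (2 * ν ^ J) from
      funext fun J => by simp [one_div]] at h4'
  have h4 : Tendsto (fun J : ℕ => m.toReal ^ (1 / (2 * ν ^ J))) atTop (nhds 1) := by
    have hrw : ∀ J : ℕ, m.toReal ^ (1 / (2 * ν ^ J)) =
        Real.exp (Real.log m.toReal * (1 / (2 * ν ^ J))) :=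
      fun J => Real.rpow_def_of_pos hmR _
    simp_rw [hrw]
    have h5 : Tendsto (fun J : ℕ => Real.log m.toReal * (1 / (2 * ν ^ J))) atTop
        (nhds (Real.log m.toReal * 0)) := h1.const_mul _
    rw [mul_zero] at h5
    have h6 := (Real.continuous_exp.tendsto 0).comp h5
    simpa [Function.comp_def, Real.exp_zero] using h6
  have htend : Tendsto (fun J : ℕ => c.toReal * m.toReal ^ (1 / (2 * ν ^ J))) atTop
      (nhds (c.toReal * 1)) := h4.const_mul _
  have hcle : c.toReal ≤
      (ENNReal.ofReal (Real.exp B * k ^ ((n : ℝ) / 2)) * eLpNorm F 2 μ).toReal := by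
    have := le_of_tendsto htend (Filter.Eventually.of_forall hrealle)
    simpa using this
  calc c = ENNReal.ofReal c.toReal := (ENNReal.ofReal_toReal hcne).symm
    _ ≤ ENNReal.ofReal
          (ENNReal.ofReal (Real.exp B * k ^ ((n : ℝ) / 2)) * eLpNorm F 2 μ).toReal :=
        ENNReal.ofReal_le_ofReal hcle
    _ = ENNReal.ofReal (Real.exp B * k ^ ((n : ℝ) / 2)) * eLpNorm F 2 μ :=
        ENNReal.ofReal_toReal hLtop
end

section
/- Let (X, μ) be a measure space with μ(X) < ∞, let n ≥ 2 be an integer, ν = n/(n−1), and set q_j = ν^j for j ∈ ℕ. Let C ≥ 1 and k ≥ 1 be reals. If F : X → [0, ∞) is a bounded measurable function satisfying ‖F‖_{L^{q_{j+1}}(μ)}^{q_j} ≤ C·q_j·k·‖F‖_{L^{q_j}(μ)}^{q_j} for every j ≥ 0, then ‖F‖_{L^∞(μ)} ≤ C′·k^n·‖F‖_{L¹(μ)}, where C′ > 0 depends only on n and C. -/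
open MeasureTheory Filter
open scoped ENNReal NNReal

/-- Measure-theoretic core of the sup-norm estimate: let `n ≥ 2`, `ν = n/(n−1)`,
`q_j = ν^j`, and `C ≥ 1`. There is `C' > 0` depending only on `n` and `C` such
that for any finite measure space `(X, μ)`, any real `k ≥ 1`, and any bounded
measurable nonnegative `F : X → ℝ` satisfying
`‖F‖_{L^{q_{j+1}}}^{q_j} ≤ C·q_j·k·‖F‖_{L^{q_j}}^{q_j}` for every `j`,
one has `‖F‖_{L^∞} ≤ C'·kⁿ·‖F‖_{L¹}`. -/
theorem moser_iteration_sup_estimate (n : ℕ) (hn : 2 ≤ n) (C : ℝ) (hC : 1 ≤ C) :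
    ∃ C' : ℝ, 0 < C' ∧
      ∀ (X : Type) [MeasurableSpace X] (μ : Measure X) [IsFiniteMeasure μ]
        (k : ℝ), 1 ≤ k → ∀ F : X → ℝ,
        Measurable F → (∀ x, 0 ≤ F x) → (∃ M : ℝ, ∀ x, F x ≤ M) →
        (∀ j : ℕ,
          eLpNorm F (ENNReal.ofReal (((n : ℝ) / ((n : ℝ) - 1)) ^ (j + 1))) μ ^
              (((n : ℝ) / ((n : ℝ) - 1)) ^ j) ≤
            ENNReal.ofReal (C * ((n : ℝ) / ((n : ℝ) - 1)) ^ j * k) *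
              eLpNorm F (ENNReal.ofReal (((n : ℝ) / ((n : ℝ) - 1)) ^ j)) μ ^
                (((n : ℝ) / ((n : ℝ) - 1)) ^ j)) →
        eLpNorm F ⊤ μ ≤ ENNReal.ofReal (C' * k ^ n) * eLpNorm F 1 μ := by
  have hN : (2:ℝ) ≤ (n:ℝ) := by exact_mod_cast hn
  set N : ℝ := (n:ℝ) with hNdef
  have hN0 : (0:ℝ) < N - 1 := by linarith
  set ν : ℝ := N / (N - 1) with hνdef
  have hν1 : 1 < ν := (one_lt_div hN0).2 (by linarith)
  have hν0 : 0 < ν := lt_trans one_pos hν1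
  have hν2 : ν ≤ 2 := by rw [hνdef, div_le_iff₀ hN0]; linarith
  set r : ℝ := ν⁻¹ with hrdef
  have hr_eq : r = (N - 1) / N := by rw [hrdef, hνdef, inv_div]
  have hr0 : 0 ≤ r := by rw [hrdef]; positivity
  have hr1 : r < 1 := by rw [hr_eq, div_lt_one (by linarith)]; linarith
  have h1r : 1 - r = 1 / N := by rw [hr_eq]; field_simp; ring
  -- geometric sum bounds
  have hsumS : ∀ m : ℕ, ∑ j ∈ Finset.range m, r ^ j ≤ N := by
    intro m
    calc ∑ j ∈ Finset.range m, r ^ j ≤ ∑' j : ℕ, r ^ j :=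
          Summable.sum_le_tsum _ (fun i _ => pow_nonneg hr0 i)
            (summable_geometric_of_lt_one hr0 hr1)
      _ = (1 - r)⁻¹ := tsum_geometric_of_lt_one hr0 hr1
      _ = N := by rw [h1r, one_div, inv_inv]
  have habs : ‖r‖ < 1 := by rw [Real.norm_eq_abs, abs_of_nonneg hr0]; exact hr1
  have hsumT : ∀ m : ℕ, ∑ j ∈ Finset.range m, (j:ℝ) * r ^ j ≤ N * N := by
    intro m
    have hsummable : Summable (fun j : ℕ => (j:ℝ) * r ^ j) :=
      (hasSum_coe_mul_geometric_of_norm_lt_one habs).summable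
    calc ∑ j ∈ Finset.range m, (j:ℝ) * r ^ j ≤ ∑' j : ℕ, (j:ℝ) * r ^ j :=
          Summable.sum_le_tsum _ (fun i _ => by positivity) hsummable
      _ = r / (1 - r) ^ 2 := tsum_coe_mul_geometric_of_norm_lt_one habs
      _ = N * (N - 1) := by
          have hNne : N ≠ 0 := by linarith
          rw [hr_eq]; field_simp; ring
      _ ≤ N * N := by nlinarith
  refine ⟨C ^ n * 2 ^ (n * n), by positivity, ?_⟩
  intro X _ μ _ k hk F hFmeas hF0 hFbdd hiter
  have hCk : 1 ≤ C * k := by nlinarith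
  set x : ℝ≥0∞ := ENNReal.ofReal (C * k) with hxdef
  set y : ℝ≥0∞ := ENNReal.ofReal ν with hydef
  have hx1 : 1 ≤ x := by
    rw [hxdef, ← ENNReal.ofReal_one]; exact ENNReal.ofReal_le_ofReal hCk
  have hx0 : x ≠ 0 := (zero_lt_one.trans_le hx1).ne'
  have hxt : x ≠ ⊤ := ENNReal.ofReal_ne_top
  have hy1 : 1 ≤ y := by
    rw [hydef, ← ENNReal.ofReal_one]; exact ENNReal.ofReal_le_ofReal hν1.le
  have hy0 : y ≠ 0 := (zero_lt_one.trans_le hy1).ne'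
  have hyt : y ≠ ⊤ := ENNReal.ofReal_ne_top
  set A : ℕ → ℝ≥0∞ := fun j => eLpNorm F (ENNReal.ofReal (ν ^ j)) μ with hAdef
  have hA0 : A 0 = eLpNorm F 1 μ := by
    simp [hAdef]
  -- single iteration step
  have step : ∀ m : ℕ, A (m + 1) ≤ x ^ (r ^ m) * y ^ ((m:ℝ) * r ^ m) * A m := by
    intro m
    have h := hiter m
    have hrm : (0:ℝ) ≤ r ^ m := by positivity
    have hstep := ENNReal.rpow_le_rpow h hrm
    have hνr : ν ^ m * r ^ m = 1 := by
      rw [hrdef, ← mul_pow, mul_inv_cancel₀ hν0.ne', one_pow]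
    rw [← ENNReal.rpow_mul, hνr, ENNReal.rpow_one,
      ENNReal.mul_rpow_of_nonneg _ _ hrm, ← ENNReal.rpow_mul, hνr,
      ENNReal.rpow_one] at hstep
    have hre : C * ν ^ m * k = (C * k) * ν ^ m := by ring
    have hw : (ENNReal.ofReal (C * ν ^ m * k)) ^ (r ^ m : ℝ)
        = x ^ (r ^ m : ℝ) * y ^ ((m:ℝ) * r ^ m) := by
      rw [hre, ENNReal.ofReal_mul (by linarith), ENNReal.ofReal_pow hν0.le,
        ENNReal.mul_rpow_of_nonneg _ _ hrm]
      congr 1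
      rw [← ENNReal.rpow_natCast (ENNReal.ofReal ν) m, ← ENNReal.rpow_mul]
    rw [hw] at hstep
    exact hstep
  -- iterated estimate
  have key : ∀ m : ℕ, A m ≤
      x ^ (∑ j ∈ Finset.range m, r ^ j) * y ^ (∑ j ∈ Finset.range m, (j:ℝ) * r ^ j)
        * A 0 := by
    intro m
    induction m with
    | zero => simp
    | succ m ih =>
      calc A (m + 1) ≤ x ^ (r ^ m) * y ^ ((m:ℝ) * r ^ m) * A m := step m
        _ ≤ x ^ (r ^ m) * y ^ ((m:ℝ) * r ^ m) *
            (x ^ (∑ j ∈ Finset.range m, r ^ j) *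
              y ^ (∑ j ∈ Finset.range m, (j:ℝ) * r ^ j) * A 0) :=
          mul_le_mul_right ih _
        _ = (x ^ (∑ j ∈ Finset.range m, r ^ j) * x ^ (r ^ m)) *
            (y ^ (∑ j ∈ Finset.range m, (j:ℝ) * r ^ j) * y ^ ((m:ℝ) * r ^ m)) * A 0 := by
          ring
        _ = x ^ (∑ j ∈ Finset.range (m + 1), r ^ j) *
            y ^ (∑ j ∈ Finset.range (m + 1), (j:ℝ) * r ^ j) * A 0 := by
          rw [Finset.sum_range_succ, Finset.sum_range_succ,
            ENNReal.rpow_add _ _ hx0 hxt, ENNReal.rpow_add _ _ hy0 hyt]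
  -- uniform bound
  set L : ℝ≥0∞ := ENNReal.ofReal (C ^ n * 2 ^ (n * n) * k ^ n) * eLpNorm F 1 μ with hLdef
  have hAL : ∀ m : ℕ, A m ≤ L := by
    intro m
    refine (key m).trans ?_
    rw [hLdef, ← hA0]
    refine mul_le_mul_left ?_ (A 0)
    have h1 : x ^ (∑ j ∈ Finset.range m, r ^ j) ≤ x ^ (N : ℝ) :=
      ENNReal.rpow_le_rpow_of_exponent_le hx1 (hsumS m)
    have h2 : y ^ (∑ j ∈ Finset.range m, (j:ℝ) * r ^ j) ≤ y ^ (N * N : ℝ) :=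
      ENNReal.rpow_le_rpow_of_exponent_le hy1 (hsumT m)
    refine (mul_le_mul' h1 h2).trans ?_
    have hxN : x ^ (N : ℝ) = ENNReal.ofReal ((C * k) ^ n) := by
      rw [hNdef, ENNReal.rpow_natCast, hxdef, ← ENNReal.ofReal_pow (by linarith)]
    have hyN : y ^ (N * N : ℝ) ≤ ENNReal.ofReal ((2:ℝ) ^ (n * n)) := by
      have : (N * N : ℝ) = ((n * n : ℕ) : ℝ) := by push_cast [hNdef]; ring
      rw [this, ENNReal.rpow_natCast, ← ENNReal.ofReal_pow hν0.le]
      exact ENNReal.ofReal_le_ofReal (pow_le_pow_left₀ hν0.le hν2 _)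
    refine (mul_le_mul' hxN.le hyN).trans ?_
    rw [← ENNReal.ofReal_mul (by positivity)]
    refine ENNReal.ofReal_le_ofReal (le_of_eq ?_)
    rw [mul_pow]; ring
  -- pass to the limit
  rw [eLpNorm_exponent_top]
  refine ENNReal.le_of_forall_nnreal_lt ?_
  intro ρ hρ
  set s : Set X := {z | ρ < ‖F z‖₊} with hsdef
  have hs_meas : MeasurableSet s := measurableSet_lt measurable_const hFmeas.nnnorm
  have hμs0 : μ s ≠ 0 := by
    intro h0
    have hae : ∀ᵐ z ∂μ, ‖F z‖₊ ≤ ρ := by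
      rw [ae_iff]
      convert h0 using 2
      ext z
      simp [hsdef, not_le]
    exact absurd (eLpNormEssSup_le_of_ae_nnnorm_bound hae) (not_le.2 hρ)
  have hμst : μ s ≠ ⊤ := measure_ne_top μ s
  -- lower bound along the sequence of exponents
  have hlow : ∀ m : ℕ, (ρ : ℝ≥0∞) * μ s ^ (r ^ m : ℝ) ≤ L := by
    intro m
    have hp0 : ENNReal.ofReal (ν ^ m) ≠ 0 := by
      simp [ENNReal.ofReal_eq_zero, not_le]
      positivity
    have hpt : ENNReal.ofReal (ν ^ m) ≠ ⊤ := ENNReal.ofReal_ne_top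
    have hb := le_eLpNorm_of_bddBelow (μ := μ) (f := F) (p := ENNReal.ofReal (ν ^ m))
      hp0 hpt ρ hs_meas (ae_of_all _ fun z hz => (le_of_lt hz))
    rw [ENNReal.smul_def, smul_eq_mul, ENNReal.toReal_ofReal (by positivity),
      one_div, ← inv_pow, ← hrdef] at hb
    exact hb.trans (hAL m)
  have hb0 : 0 < (μ s).toReal := ENNReal.toReal_pos hμs0 hμst
  have hμs_eq : ∀ c : ℝ, μ s ^ (c : ℝ) = ENNReal.ofReal ((μ s).toReal ^ c) := by
    intro c
    conv_lhs => rw [← ENNReal.ofReal_toReal hμst]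
    exact ENNReal.ofReal_rpow_of_pos hb0
  have htend0 : Tendsto (fun m : ℕ => r ^ m) atTop (nhds 0) :=
    tendsto_pow_atTop_nhds_zero_of_lt_one hr0 hr1
  have htendR : Tendsto (fun m : ℕ => (μ s).toReal ^ (r ^ m : ℝ)) atTop (nhds 1) := by
    have : Tendsto (fun m : ℕ => Real.exp (Real.log (μ s).toReal * r ^ m)) atTop
        (nhds (Real.exp (Real.log (μ s).toReal * 0))) :=
      (Real.continuous_exp.tendsto _).comp (tendsto_const_nhds.mul htend0)
    simpa [Real.rpow_def_of_pos hb0] using this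
  have htend : Tendsto (fun m : ℕ => (ρ : ℝ≥0∞) * μ s ^ (r ^ m : ℝ)) atTop
      (nhds ((ρ : ℝ≥0∞) * 1)) := by
    have h1 : Tendsto (fun m : ℕ => μ s ^ (r ^ m : ℝ)) atTop (nhds 1) := by
      simp_rw [hμs_eq]
      have := (ENNReal.continuous_ofReal.tendsto 1).comp htendR
      rw [ENNReal.ofReal_one] at this
      exact this
    exact ENNReal.Tendsto.const_mul h1 (Or.inr ENNReal.coe_ne_top)
  have := le_of_tendsto htend (Eventually.of_forall hlow)
  rw [mul_one] at this
  exact this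
end
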